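/- arXiv:1510.07158 — 4 statements merged into one kernel-verified Lean document; each statement's English description precedes it below -/
import Mathlib

section
/- Let J be a nonempty finite index set and let c_j ∈ (0,1) for each j ∈ J. If ∑_{j∈J} c_j > 1, then the equation x = ∏_{j∈J} ((1 - c_j) + c_j x) has exactly one solution x in the open interval (0,1). -/
open Finset Set

/-- Weierstrass-type upper bound: `∏ (1 - a j) ≤ 1 - ∑ a j + (∑ a j)^2 / 2`. -/
lemma prod_one_sub_le_aux {ι : Type*} (J : Finset ι) (a : ι → ℝ)
    (h0 : ∀ j ∈ J, 0 ≤ a j) (h1 : ∀ j ∈ J, a j ≤ 1) :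
    ∏ j ∈ J, (1 - a j) ≤ 1 - (∑ j ∈ J, a j) + (∑ j ∈ J, a j) ^ 2 / 2 := by
  classical
  induction J using Finset.induction_on with
  | empty => simp
  | insert i s hi ih =>
    have h0' : ∀ j ∈ s, 0 ≤ a j := fun j hj => h0 j (Finset.mem_insert_of_mem hj)
    have h1' : ∀ j ∈ s, a j ≤ 1 := fun j hj => h1 j (Finset.mem_insert_of_mem hj)
    have hai : 0 ≤ a i := h0 i (Finset.mem_insert_self i s)
    have hai1 : a i ≤ 1 := h1 i (Finset.mem_insert_self i s)
    have IH := ih h0' h1'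
    rw [Finset.prod_insert hi, Finset.sum_insert hi]
    set S := ∑ j ∈ s, a j with hS
    have hS0 : 0 ≤ S := Finset.sum_nonneg h0'
    have key : (1 - a i) * (∏ j ∈ s, (1 - a j)) ≤ (1 - a i) * (1 - S + S ^ 2 / 2) :=
      mul_le_mul_of_nonneg_left IH (by linarith)
    nlinarith [mul_nonneg hai (sq_nonneg S), sq_nonneg (a i)]

/-- For a nonempty finite index set `J` with `c j ∈ (0,1)` for all `j ∈ J` and
`∑ j ∈ J, c j > 1`, the equation `x = ∏ j ∈ J, ((1 - c j) + c j * x)` has exactly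
one solution in the open interval `(0,1)`. -/
theorem unique_fixed_point_in_Ioo {ι : Type*} (J : Finset ι) (hJ : J.Nonempty)
    (c : ι → ℝ) (hc : ∀ j ∈ J, c j ∈ Set.Ioo (0 : ℝ) 1)
    (hsum : 1 < ∑ j ∈ J, c j) :
    ∃! x : ℝ, x ∈ Set.Ioo (0 : ℝ) 1 ∧ x = ∏ j ∈ J, ((1 - c j) + c j * x) := by
  classical
  set s := ∑ j ∈ J, c j with hs_def
  set F : ℝ → ℝ := fun x => ∏ j ∈ J, ((1 - c j) + c j * x) with hF_def
  set D : ℝ → ℝ := fun x => ∑ j ∈ J, (∏ k ∈ J.erase j, ((1 - c k) + c k * x)) • (c j)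
    with hD_def
  -- derivative
  have hF : ∀ x : ℝ, HasDerivAt F (D x) x := by
    intro x
    exact HasDerivAt.fun_finsetProd (fun i _ => by
      simpa using ((hasDerivAt_id x).const_mul (c i)).const_add (1 - c i))
  have hFcont : Continuous F := by
    fun_prop
  -- cardinality at least 2
  have hcard : 2 ≤ J.card := by
    by_contra h
    push_neg at h
    interval_cases hJc : J.card
    · exact absurd (Finset.card_eq_zero.mp hJc ▸ hJ) (by simp)
    · obtain ⟨j, hj⟩ := Finset.card_eq_one.mp hJc
      rw [hs_def, hj, Finset.sum_singleton] at hsum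
      have := (hc j (by simp [hj])).2
      linarith
  -- positivity of factors on x ≥ 0
  have hfac : ∀ x : ℝ, 0 ≤ x → ∀ k ∈ J, 0 < (1 - c k) + c k * x := by
    intro x hx k hk
    have h1 := (hc k hk).1
    have h2 := (hc k hk).2
    nlinarith
  -- strict monotonicity of the derivative on [0, ∞)
  have hDmono : StrictMonoOn D (Set.Ici (0:ℝ)) := by
    intro x hx y hy hxy
    simp only [hD_def, smul_eq_mul]
    apply Finset.sum_lt_sum_of_nonempty hJ
    intro j hj
    have herase : (J.erase j).Nonempty := by
      rw [← Finset.card_pos, Finset.card_erase_of_mem hj]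
      omega
    have hprod : ∏ k ∈ J.erase j, ((1 - c k) + c k * x)
        < ∏ k ∈ J.erase j, ((1 - c k) + c k * y) := by
      apply Finset.prod_lt_prod
      · intro k hk
        exact hfac x hx k (Finset.mem_of_mem_erase hk)
      · intro k hk
        have := (hc k (Finset.mem_of_mem_erase hk)).1
        nlinarith
      · obtain ⟨k, hk⟩ := herase
        refine ⟨k, hk, ?_⟩
        have := (hc k (Finset.mem_of_mem_erase hk)).1
        nlinarith
    exact mul_lt_mul_of_pos_right hprod (hc j hj).1
  have hF1 : F 1 = 1 := by
    simp only [hF_def]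
    apply Finset.prod_eq_one
    intro j _
    ring
  -- existence of a point where F x < x
  set t : ℝ := (s - 1) / s ^ 2 with ht_def
  have hs0 : 0 < s := by linarith
  have ht0 : 0 < t := div_pos (by linarith) (by positivity)
  have ht1 : t < 1 := by
    rw [ht_def, div_lt_one (by positivity)]
    nlinarith
  set x₁ : ℝ := 1 - t with hx₁_def
  have hx₁0 : 0 < x₁ := by linarith
  have hx₁1 : x₁ < 1 := by linarith
  have hFx₁ : F x₁ < x₁ := by
    have heq : F x₁ = ∏ j ∈ J, (1 - c j * t) := by
      apply Finset.prod_congr rfl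
      intro j _
      ring
    have hsumeq : ∑ j ∈ J, c j * t = s * t := by
      rw [hs_def, ← Finset.sum_mul]
    have hbound := prod_one_sub_le_aux J (fun j => c j * t)
      (fun j hj => by have := (hc j hj).1; show (0:ℝ) ≤ c j * t; positivity)
      (fun j hj => by
        have h2 := (hc j hj).2
        show c j * t ≤ 1
        nlinarith [mul_lt_mul_of_pos_right h2 ht0])
    rw [hsumeq] at hbound
    have hst : s ^ 2 * t = s - 1 := by
      rw [ht_def]; field_simp
    have : 1 - s * t + (s * t) ^ 2 / 2 < 1 - t := by nlinarith
    calc F x₁ = ∏ j ∈ J, (1 - c j * t) := heq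
      _ ≤ 1 - s * t + (s * t) ^ 2 / 2 := hbound
      _ < 1 - t := this
  have hF0 : 0 < F 0 := by
    apply Finset.prod_pos
    intro j hj
    exact hfac 0 le_rfl j hj
  -- IVT for g x = x - F x
  set g : ℝ → ℝ := fun x => x - F x with hg_def
  have hgcont : Continuous g := (continuous_id.sub hFcont)
  have hg0 : g 0 < 0 := by simp [hg_def]; linarith
  have hgx₁ : 0 < g x₁ := by simp only [hg_def]; linarith
  have hIVT := intermediate_value_Ioo (le_of_lt hx₁0) hgcont.continuousOn
  have h0mem : (0:ℝ) ∈ Set.Ioo (g 0) (g x₁) := ⟨hg0, hgx₁⟩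
  obtain ⟨x₀, hx₀mem, hx₀eq⟩ := hIVT h0mem
  have hx₀Ioo : x₀ ∈ Set.Ioo (0:ℝ) 1 := ⟨hx₀mem.1, lt_trans hx₀mem.2 hx₁1⟩
  have hx₀fix : x₀ = F x₀ := by
    have : x₀ - F x₀ = 0 := hx₀eq
    linarith
  -- uniqueness
  have huniq : ∀ x y : ℝ, x ∈ Set.Ioo (0:ℝ) 1 → F x = x → y ∈ Set.Ioo (0:ℝ) 1 →
      F y = y → x < y → False := by
    intro x y hx hfx hy hfy hxy
    obtain ⟨a, ha, hDa⟩ := exists_hasDerivAt_eq_slope F D hxy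
      hFcont.continuousOn (fun z _ => hF z)
    obtain ⟨b, hb, hDb⟩ := exists_hasDerivAt_eq_slope F D hy.2
      hFcont.continuousOn (fun z _ => hF z)
    rw [hfx, hfy, div_self (ne_of_gt (by linarith : (0:ℝ) < y - x))] at hDa
    rw [hF1, hfy, div_self (ne_of_gt (by linarith [hy.2] : (0:ℝ) < 1 - y))] at hDb
    have hab : a < b := lt_trans ha.2 hb.1
    have haI : a ∈ Set.Ici (0:ℝ) := le_of_lt (lt_trans hx.1 ha.1)
    have hbI : b ∈ Set.Ici (0:ℝ) := le_of_lt (lt_trans hy.1 hb.1)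
    have := hDmono haI hbI hab
    rw [hDa, hDb] at this
    exact lt_irrefl 1 this
  refine ⟨x₀, ⟨hx₀Ioo, hx₀fix⟩, ?_⟩
  intro y ⟨hyIoo, hyfix⟩
  rcases lt_trichotomy y x₀ with h | h | h
  · exact absurd (huniq y x₀ hyIoo hyfix.symm hx₀Ioo hx₀fix.symm h) (by simp)
  · exact h
  · exact absurd (huniq x₀ y hx₀Ioo hx₀fix.symm hyIoo hyfix.symm h) (by simp)
end

section
/- Let J be a nonempty finite index set and let c_j ∈ (0,1) for each j ∈ J with ∑_{j∈J} c_j > 1. Then there exists x* ∈ (0,1) such that the set of fixed points of f_c in the closed interval [0,1] is exactly {x*, 1}; in particular f_c(1) = 1 and 0 is not a fixed point. -/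
open Set

/-- A strictly convex function vanishing at three distinct points is impossible. -/
lemma no_three_zeros_aux {s : Set ℝ} {g : ℝ → ℝ} (hg : StrictConvexOn ℝ s g)
    {a b d : ℝ} (ha : a ∈ s) (hd : d ∈ s) (hab : a < b) (hbd : b < d)
    (ga : g a = 0) (gb : g b = 0) (gd : g d = 0) : False := by
  have had : a < d := hab.trans hbd
  set l : ℝ := (d - b) / (d - a) with hl
  set m : ℝ := (b - a) / (d - a) with hm
  have hda : (0:ℝ) < d - a := by linarith
  have hlpos : 0 < l := div_pos (by linarith) hda
  have hmpos : 0 < m := div_pos (by linarith) hda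
  have hsum : l + m = 1 := by
    rw [hl, hm, ← add_div, div_eq_one_iff_eq hda.ne']; ring
  have hcomb : l • a + m • d = b := by
    rw [hl, hm, smul_eq_mul, smul_eq_mul, div_mul_eq_mul_div, div_mul_eq_mul_div, ← add_div,
      div_eq_iff hda.ne']
    ring
  have h := hg.2 ha hd (ne_of_lt had) hlpos hmpos hsum
  rw [hcomb, ga, gb, gd] at h
  simp at h

/-- For a nonempty finite index set `J` with `c j ∈ (0,1)` and `∑ c j > 1`, there is
`x* ∈ (0,1)` such that the fixed points of `f_c (x) = ∏ j ∈ J, ((1 - c j) + c j * x)`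
in `[0,1]` are exactly `{x*, 1}`; in particular `f_c 1 = 1` and `0` is not a fixed point. -/
theorem fixed_points_in_Icc_eq_pair {ι : Type*} (J : Finset ι) (hJ : J.Nonempty)
    (c : ι → ℝ) (hc : ∀ j ∈ J, c j ∈ Set.Ioo (0 : ℝ) 1)
    (hsum : 1 < ∑ j ∈ J, c j) :
    ∃ xstar ∈ Set.Ioo (0 : ℝ) 1,
      {x ∈ Set.Icc (0 : ℝ) 1 | (∏ j ∈ J, ((1 - c j) + c j * x)) = x} = {xstar, 1} ∧
      (∏ j ∈ J, ((1 - c j) + c j * (1 : ℝ))) = 1 ∧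
      (∏ j ∈ J, ((1 - c j) + c j * (0 : ℝ))) ≠ 0 := by
  classical
  set f : ℝ → ℝ := fun x => ∏ j ∈ J, ((1 - c j) + c j * x) with hf
  have hfac : ∀ j ∈ J, ∀ x : ℝ, 0 ≤ x → 0 < (1 - c j) + c j * x := by
    intro j hj x hx
    have h := hc j hj
    nlinarith [h.1, h.2]
  have hfpos : ∀ x : ℝ, 0 ≤ x → 0 < f x :=
    fun x hx => Finset.prod_pos (fun j hj => hfac j hj x hx)
  have hf1 : f 1 = 1 := by simp [hf]
  have hf0 : 0 < f 0 := hfpos 0 le_rfl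
  have herase : ∀ j ∈ J, (J.erase j).Nonempty := by
    intro j hj
    rcases Finset.eq_empty_or_nonempty (J.erase j) with h | h
    · exfalso
      have hJj : J = {j} := by
        apply Finset.eq_singleton_iff_unique_mem.2
        refine ⟨hj, fun y hy => ?_⟩
        by_contra hne
        exact Finset.notMem_empty y (h ▸ Finset.mem_erase.2 ⟨hne, hy⟩)
      rw [hJj] at hsum
      simp at hsum
      exact absurd hsum (not_lt.2 (hc j hj).2.le)
    · exact h
  have hder : ∀ x : ℝ, HasDerivAt f
      (∑ j ∈ J, (∏ k ∈ J.erase j, ((1 - c k) + c k * x)) • c j) x := by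
    intro x
    apply HasDerivAt.fun_finsetProd
    intro j hj
    simpa using ((hasDerivAt_id x).const_mul (c j)).const_add (1 - c j)
  have hderiv : ∀ x : ℝ, deriv f x
      = ∑ j ∈ J, (∏ k ∈ J.erase j, ((1 - c k) + c k * x)) * c j := by
    intro x
    simpa [smul_eq_mul] using (hder x).deriv
  have hmono : StrictMonoOn (deriv f) (interior (Icc (0:ℝ) 1)) := by
    rw [interior_Icc]
    intro x hx y hy hxy
    rw [hderiv, hderiv]
    apply Finset.sum_lt_sum_of_nonempty hJ
    intro j hj
    have hx0 : (0:ℝ) ≤ x := hx.1.le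
    apply mul_lt_mul_of_pos_right _ (hc j hj).1
    apply Finset.prod_lt_prod_of_nonempty
    · intro k hk
      exact hfac k (Finset.mem_of_mem_erase hk) x hx0
    · intro k hk
      have := (hc k (Finset.mem_of_mem_erase hk)).1
      nlinarith
    · exact herase j hj
  have hfc : Continuous f := by
    apply continuous_finset_prod
    intro j hj
    continuity
  have hconv : StrictConvexOn ℝ (Icc (0:ℝ) 1) f :=
    hmono.strictConvexOn_of_deriv (convex_Icc 0 1) hfc.continuousOn
  set g : ℝ → ℝ := fun x => f x - x with hg
  have hgconv : StrictConvexOn ℝ (Icc (0:ℝ) 1) g :=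
    hconv.sub_concaveOn (concaveOn_id (convex_Icc 0 1))
  have hg1 : g 1 = 0 := by simp [hg, hf1]
  have hg0 : 0 < g 0 := by simpa [hg] using hf0
  have hgc : Continuous g := hfc.sub continuous_id
  have hgder : HasDerivAt g ((∑ j ∈ J, c j) - 1) 1 := by
    have h1 := (hder 1).sub (hasDerivAt_id 1)
    have heq : (∑ j ∈ J, (∏ k ∈ J.erase j, ((1 - c k) + c k * (1:ℝ))) • c j)
        = ∑ j ∈ J, c j := by
      apply Finset.sum_congr rfl
      intro j hj
      simp
    rwa [heq] at h1
  obtain ⟨x0, hx0mem, hx0neg⟩ : ∃ x0 ∈ Ioo (0:ℝ) 1, g x0 < 0 := by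
    have htend := hasDerivAt_iff_tendsto_slope.1 hgder
    have hpos : (0:ℝ) < (∑ j ∈ J, c j) - 1 := by linarith
    have hev : ∀ᶠ x in nhdsWithin 1 {(1:ℝ)}ᶜ, 0 < slope g 1 x :=
      htend.eventually (eventually_gt_nhds hpos)
    have hle : nhdsWithin (1:ℝ) (Iio 1) ≤ nhdsWithin 1 {(1:ℝ)}ᶜ :=
      nhdsWithin_mono 1 (fun x hx => ne_of_lt hx)
    have hev2 : ∀ᶠ x in nhdsWithin (1:ℝ) (Iio 1), 0 < slope g 1 x := hle hev
    have hmem : Ioo (0:ℝ) 1 ∈ nhdsWithin (1:ℝ) (Iio 1) :=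
      Ioo_mem_nhdsLT_of_mem (by constructor <;> norm_num)
    obtain ⟨x, hx1, hx2⟩ := (hev2.and (Filter.eventually_of_mem hmem fun y hy => hy)).exists
    refine ⟨x, hx2, ?_⟩
    rw [slope_def_field] at hx1
    rcases div_pos_iff.1 hx1 with ⟨_, hb⟩ | ⟨ha, _⟩
    · linarith [hx2.2]
    · linarith [hg1, ha]
  -- IVT: g 0 > 0, g x0 < 0
  obtain ⟨xstar, hxstar, hgxstar⟩ : ∃ xs ∈ Ioo (0:ℝ) x0, g xs = 0 := by
    have h0x0 : (0:ℝ) ≤ x0 := hx0mem.1.le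
    have := intermediate_value_Ioo' h0x0 hgc.continuousOn
    have h0mem : (0:ℝ) ∈ Ioo (g x0) (g 0) := ⟨hx0neg, hg0⟩
    obtain ⟨xs, hxs, hxs0⟩ := this h0mem
    exact ⟨xs, hxs, hxs0⟩
  have hxstar01 : xstar ∈ Ioo (0:ℝ) 1 := ⟨hxstar.1, hxstar.2.trans hx0mem.2⟩
  refine ⟨xstar, hxstar01, ?_, by simp, ne_of_gt hf0⟩
  ext x
  simp only [Set.mem_setOf_eq, Set.mem_insert_iff, Set.mem_singleton_iff]
  constructor
  · rintro ⟨hxI, hxfix⟩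
    have hgx : g x = 0 := sub_eq_zero.mpr hxfix
    by_contra hcon
    push_neg at hcon
    obtain ⟨hne1, hne2⟩ := hcon
    have hx1 : x < 1 := lt_of_le_of_ne hxI.2 hne2
    rcases lt_trichotomy x xstar with h | h | h
    · -- zeros x < xstar < 1 ; need xstar ∈ Icc handled by membership
      exact no_three_zeros_aux hgconv hxI (by norm_num : (1:ℝ) ∈ Icc (0:ℝ) 1)
        h (hxstar01.2) hgx hgxstar hg1
    · exact hne1 h
    · exact no_three_zeros_aux hgconv
        (⟨hxstar01.1.le, hxstar01.2.le⟩ : xstar ∈ Icc (0:ℝ) 1)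
        (by norm_num : (1:ℝ) ∈ Icc (0:ℝ) 1) h hx1 hgxstar hgx hg1
  · rintro (rfl | rfl)
    · refine ⟨⟨hxstar01.1.le, hxstar01.2.le⟩, ?_⟩
      exact sub_eq_zero.mp hgxstar
    · exact ⟨⟨by norm_num, le_rfl⟩, by simp [hf1]⟩
end

section
/- Let r_1, r_2 ∈ (0,1) with r_1 + r_2 > 1. Then the unique pair (ξ_1, ξ_2) ∈ (0,1) × (0,1) satisfying ξ_1 = (1 - r_1) + r_1 ξ_1 ξ_2 and ξ_2 = (1 - r_2) + r_2 ξ_1 ξ_2 is given by ξ_1 = (1 - r_1)/r_2 and ξ_2 = (1 - r_2)/r_1, and in this case ξ_1 ξ_2 = (1 - r_1)(1 - r_2)/(r_1 r_2). -/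
/-- For `r₁, r₂ ∈ (0,1)` with `r₁ + r₂ > 1`, the unique pair `(ξ₁, ξ₂) ∈ (0,1)²`
satisfying `ξ₁ = (1 - r₁) + r₁ ξ₁ ξ₂` and `ξ₂ = (1 - r₂) + r₂ ξ₁ ξ₂` is
`ξ₁ = (1 - r₁)/r₂`, `ξ₂ = (1 - r₂)/r₁`, and then `ξ₁ ξ₂ = (1 - r₁)(1 - r₂)/(r₁ r₂)`. -/
theorem two_sibling_system_solution (r₁ r₂ : ℝ)
    (h1 : r₁ ∈ Set.Ioo (0 : ℝ) 1) (h2 : r₂ ∈ Set.Ioo (0 : ℝ) 1) (hsum : 1 < r₁ + r₂) :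
    ((1 - r₁) / r₂ ∈ Set.Ioo (0 : ℝ) 1) ∧
    ((1 - r₂) / r₁ ∈ Set.Ioo (0 : ℝ) 1) ∧
    ((1 - r₁) / r₂ = (1 - r₁) + r₁ * ((1 - r₁) / r₂ * ((1 - r₂) / r₁))) ∧
    ((1 - r₂) / r₁ = (1 - r₂) + r₂ * ((1 - r₁) / r₂ * ((1 - r₂) / r₁))) ∧
    (∀ ξ₁ ξ₂ : ℝ, ξ₁ ∈ Set.Ioo (0 : ℝ) 1 → ξ₂ ∈ Set.Ioo (0 : ℝ) 1 →
      ξ₁ = (1 - r₁) + r₁ * (ξ₁ * ξ₂) → ξ₂ = (1 - r₂) + r₂ * (ξ₁ * ξ₂) →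
      ξ₁ = (1 - r₁) / r₂ ∧ ξ₂ = (1 - r₂) / r₁) ∧
    ((1 - r₁) / r₂ * ((1 - r₂) / r₁) = (1 - r₁) * (1 - r₂) / (r₁ * r₂)) := by
  obtain ⟨hr1p, hr1lt⟩ := h1
  obtain ⟨hr2p, hr2lt⟩ := h2
  have hr1 : r₁ ≠ 0 := ne_of_gt hr1p
  have hr2 : r₂ ≠ 0 := ne_of_gt hr2p
  have e1 : (1 - r₁) / r₂ = (1 - r₁) + r₁ * ((1 - r₁) / r₂ * ((1 - r₂) / r₁)) := by
    field_simp; ring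
  have e2 : (1 - r₂) / r₁ = (1 - r₂) + r₂ * ((1 - r₁) / r₂ * ((1 - r₂) / r₁)) := by
    field_simp; ring
  have e3 : (1 - r₁) / r₂ * ((1 - r₂) / r₁) = (1 - r₁) * (1 - r₂) / (r₁ * r₂) := by
    rw [div_mul_div_comm, mul_comm r₂ r₁]
  refine ⟨⟨div_pos (by linarith) hr2p, ?_⟩, ⟨div_pos (by linarith) hr1p, ?_⟩, e1, e2, ?_, e3⟩
  · rw [div_lt_one hr2p]; linarith
  · rw [div_lt_one hr1p]; linarith
  · intro ξ₁ ξ₂ ⟨hx1p, hx1lt⟩ ⟨hx2p, hx2lt⟩ q1 q2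
    have hplt : ξ₁ * ξ₂ < 1 := by nlinarith
    have hfac : (ξ₁ * ξ₂ - 1) * (r₁ * r₂ * (ξ₁ * ξ₂) - (1 - r₁) * (1 - r₂)) = 0 := by
      nlinarith [mul_self_nonneg (ξ₁ - ξ₂)]
    have hp : ξ₁ * ξ₂ = (1 - r₁) * (1 - r₂) / (r₁ * r₂) := by
      rcases mul_eq_zero.1 hfac with h | h
      · linarith
      · rw [eq_div_iff (by positivity : r₁ * r₂ ≠ 0)]; linarith
    constructor
    · rw [q1, hp]; field_simp; ring
    · rw [q2, hp]; field_simp; ring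
end

section
/- Let B be a nonempty finite index set, let N > 0 be a real number, and for each i ∈ B let a_i > 0 and b_i > 0 be reals with a_i + b_i = N and ∑_{i∈B} a_i > N. Define F : (0,1)^B → ℝ by F(ξ) = ∑_{i∈B} [ a_i log(1 - ξ_i) + b_i log(ξ_i) ] − N log(1 − ∏_{j∈B} ξ_j). Then F has exactly one stationary point in (0,1)^B, namely the point ξ with ξ_i = (1 − r_i) + r_i π* for every i ∈ B, where r_i = a_i/N and π* is the unique solution in (0,1) of π = ∏_{j∈B} ((1 − r_j) + r_j π). -/
open Finset

section Aux

lemma prodAffineLe {ι : Type*} (s : Finset ι) (x : ι → ℝ) (t : ℝ)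
    (ht0 : 0 ≤ t) (ht1 : t ≤ 1) (hx : ∀ j ∈ s, 0 ≤ x j ∧ x j ≤ 1) :
    ∏ j ∈ s, ((1 - t) * x j + t) ≤ (1 - t) * ∏ j ∈ s, x j + t := by
  classical
  induction s using Finset.induction_on with
  | empty => simp
  | @insert c s' hcs ih =>
    have hxc := hx c (mem_insert_self c s')
    have hx' : ∀ j ∈ s', 0 ≤ x j ∧ x j ≤ 1 := fun j hj => hx j (mem_insert_of_mem hj)
    have hQ0 : 0 ≤ ∏ j ∈ s', x j := Finset.prod_nonneg fun j hj => (hx' j hj).1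
    have hQ1 : ∏ j ∈ s', x j ≤ 1 :=
      Finset.prod_le_one (fun j hj => (hx' j hj).1) (fun j hj => (hx' j hj).2)
    rw [Finset.prod_insert hcs, Finset.prod_insert hcs]
    have hfac : 0 ≤ (1 - t) * x c + t := by nlinarith [hxc.1]
    calc ((1 - t) * x c + t) * ∏ j ∈ s', ((1 - t) * x j + t)
        ≤ ((1 - t) * x c + t) * ((1 - t) * ∏ j ∈ s', x j + t) :=
          mul_le_mul_of_nonneg_left (ih hx') hfac
      _ ≤ (1 - t) * (x c * ∏ j ∈ s', x j) + t := by
          nlinarith [mul_nonneg (mul_nonneg (mul_nonneg ht0 (by linarith : (0:ℝ) ≤ 1 - t))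
            (by linarith [hxc.2] : (0:ℝ) ≤ 1 - x c)) (by linarith : (0:ℝ) ≤ 1 - ∏ j ∈ s', x j)]

lemma prodAffineLt {ι : Type*} [DecidableEq ι] (s : Finset ι) (c : ι) (hc : c ∉ s)
    (hs : s.Nonempty) (x : ι → ℝ) (t : ℝ)
    (ht0 : 0 < t) (ht1 : t < 1) (hx : ∀ j ∈ insert c s, 0 ≤ x j ∧ x j < 1) :
    ∏ j ∈ insert c s, ((1 - t) * x j + t) < (1 - t) * ∏ j ∈ insert c s, x j + t := by
  have hxc := hx c (mem_insert_self c s)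
  have hx' : ∀ j ∈ s, 0 ≤ x j ∧ x j < 1 := fun j hj => hx j (mem_insert_of_mem hj)
  have hQ0 : 0 ≤ ∏ j ∈ s, x j := Finset.prod_nonneg fun j hj => (hx' j hj).1
  obtain ⟨j0, hj0⟩ := hs
  have hQ1 : ∏ j ∈ s, x j < 1 := by
    rw [← Finset.mul_prod_erase s x hj0]
    have he1 : ∏ j ∈ s.erase j0, x j ≤ 1 :=
      Finset.prod_le_one (fun j hj => (hx' j (mem_of_mem_erase hj)).1)
        (fun j hj => (hx' j (mem_of_mem_erase hj)).2.le)
    have he0 : 0 ≤ ∏ j ∈ s.erase j0, x j :=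
      Finset.prod_nonneg fun j hj => (hx' j (mem_of_mem_erase hj)).1
    nlinarith [(hx' j0 hj0).1, (hx' j0 hj0).2]
  have hle : ∏ j ∈ s, ((1 - t) * x j + t) ≤ (1 - t) * ∏ j ∈ s, x j + t :=
    prodAffineLe s x t ht0.le ht1.le fun j hj => ⟨(hx' j hj).1, (hx' j hj).2.le⟩
  rw [Finset.prod_insert hc, Finset.prod_insert hc]
  have hfac : 0 < (1 - t) * x c + t := by nlinarith [hxc.1]
  calc ((1 - t) * x c + t) * ∏ j ∈ s, ((1 - t) * x j + t)
      ≤ ((1 - t) * x c + t) * ((1 - t) * ∏ j ∈ s, x j + t) :=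
        mul_le_mul_of_nonneg_left hle hfac.le
    _ < (1 - t) * (x c * ∏ j ∈ s, x j) + t := by
        nlinarith [mul_pos (mul_pos (mul_pos ht0 (by linarith : (0:ℝ) < 1 - t))
          (by linarith [hxc.2] : (0:ℝ) < 1 - x c)) (by linarith : (0:ℝ) < 1 - ∏ j ∈ s, x j)]

/-- If `p` is a fixed point of `π ↦ ∏ (1 - r j + r j π)` in `(0,1)` and `p < q < 1`,
then strict convexity forces the map to lie strictly below the diagonal at `q`. -/
lemma fixedLt {ι : Type*} [DecidableEq ι] (B : Finset ι) (hcard : 2 ≤ B.card)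
    (r : ι → ℝ) (hr : ∀ j ∈ B, 0 < r j ∧ r j < 1)
    (p q : ℝ) (hp : p ∈ Set.Ioo (0:ℝ) 1) (hq : q ∈ Set.Ioo (0:ℝ) 1)
    (hfp : p = ∏ j ∈ B, ((1 - r j) + r j * p)) (hpq : p < q) :
    ∏ j ∈ B, ((1 - r j) + r j * q) < q := by
  obtain ⟨pl, pu⟩ := hp
  obtain ⟨ql, qu⟩ := hq
  set t : ℝ := (q - p) / (1 - p) with ht
  have h1p : (0:ℝ) < 1 - p := by linarith
  have ht0 : 0 < t := div_pos (by linarith) h1p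
  have ht1 : t < 1 := by rw [div_lt_one h1p]; linarith
  have hq' : q = p + t * (1 - p) := by rw [ht, div_mul_cancel₀ _ h1p.ne']; ring
  have key : ∀ j ∈ B, (1 - r j) + r j * q = (1 - t) * ((1 - r j) + r j * p) + t := by
    intro j hj
    rw [hq']; ring
  rw [Finset.prod_congr rfl key]
  obtain ⟨c, hcB⟩ := Finset.card_pos.mp (by omega : 0 < B.card)
  have hBr : B = insert c (B.erase c) := (Finset.insert_erase hcB).symm
  have hc : c ∉ B.erase c := Finset.notMem_erase c B
  have hsne : (B.erase c).Nonempty := by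
    rw [← Finset.card_pos, Finset.card_erase_of_mem hcB]; omega
  have hx : ∀ j ∈ insert c (B.erase c), 0 ≤ (1 - r j) + r j * p ∧ (1 - r j) + r j * p < 1 := by
    intro j hj
    rw [← hBr] at hj
    obtain ⟨hr0, hr1⟩ := hr j hj
    constructor <;> nlinarith
  calc ∏ j ∈ B, ((1 - t) * ((1 - r j) + r j * p) + t)
      = ∏ j ∈ insert c (B.erase c), ((1 - t) * ((1 - r j) + r j * p) + t) := by rw [← hBr]
    _ < (1 - t) * ∏ j ∈ insert c (B.erase c), ((1 - r j) + r j * p) + t :=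
        prodAffineLt (B.erase c) c hc hsne _ t ht0 ht1 hx
    _ = (1 - t) * p + t := by rw [← hBr, ← hfp]
    _ = q := by rw [hq']; ring

/-- Existence of a fixed point of `π ↦ ∏ (1 - r j + r j π)` in `(0,1)` when `∑ r j > 1`. -/
lemma fixedExists {ι : Type*} (B : Finset ι)
    (r : ι → ℝ) (hr : ∀ j ∈ B, 0 < r j ∧ r j < 1)
    (hS : 1 < ∑ j ∈ B, r j) :
    ∃ c ∈ Set.Ioo (0:ℝ) 1, c = ∏ j ∈ B, ((1 - r j) + r j * c) := by
  set S := ∑ j ∈ B, r j with hSdef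
  have hS0 : 0 < S := by linarith
  set p : ℝ := (1 / S + 1) / 2 with hp
  have hSinv : 1 / S < 1 := by rw [div_lt_one hS0]; linarith
  have hSinv0 : 0 < 1 / S := by positivity
  have hp0 : 0 < p := by positivity
  have hp1 : p < 1 := by rw [hp]; linarith
  have hpS : 1 < p * S := by
    rw [hp]
    have : (1 / S) * S = 1 := by field_simp
    nlinarith
  have hglt : ∏ j ∈ B, ((1 - r j) + r j * p) < p := by
    have hterm : ∀ j ∈ B, (1 - r j) + r j * p ≤ Real.exp (-(r j * (1 - p))) := by
      intro j hj
      have := Real.add_one_le_exp (-(r j * (1 - p)))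
      linarith
    have htermpos : ∀ j ∈ B, 0 ≤ (1 - r j) + r j * p := by
      intro j hj; obtain ⟨h0, h1⟩ := hr j hj; nlinarith
    have hprodle : ∏ j ∈ B, ((1 - r j) + r j * p) ≤ Real.exp (-((1 - p) * S)) := by
      calc ∏ j ∈ B, ((1 - r j) + r j * p) ≤ ∏ j ∈ B, Real.exp (-(r j * (1 - p))) :=
            Finset.prod_le_prod htermpos hterm
        _ = Real.exp (∑ j ∈ B, -(r j * (1 - p))) := (Real.exp_sum B _).symm
        _ = Real.exp (-((1 - p) * S)) := by
            congr 1
            rw [hSdef, Finset.mul_sum, ← Finset.sum_neg_distrib]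
            exact Finset.sum_congr rfl fun j _ => by ring
    have hexplt : Real.exp (-((1 - p) * S)) < p := by
      have hx0 : (0:ℝ) < (1 - p) * S := by nlinarith
      have h1 : (1 - p) * S + 1 < Real.exp ((1 - p) * S) := Real.add_one_lt_exp hx0.ne'
      have h2 : Real.exp (-((1 - p) * S)) = 1 / Real.exp ((1 - p) * S) := by
        rw [Real.exp_neg]; rw [one_div]
      rw [h2, div_lt_iff₀ (Real.exp_pos _)]
      have : 1 < p * ((1 - p) * S + 1) := by nlinarith
      nlinarith [Real.exp_pos ((1 - p) * S)]
    linarith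
  have hg0 : 0 < ∏ j ∈ B, ((1 - r j) + r j * 0) := by
    apply Finset.prod_pos; intro j hj; obtain ⟨h0, h1⟩ := hr j hj; nlinarith
  set h : ℝ → ℝ := fun y => ∏ j ∈ B, ((1 - r j) + r j * y) - y with hh
  have hcont : Continuous h := by
    apply Continuous.sub _ continuous_id
    exact continuous_finset_prod B fun j _ => by continuity
  have h0pos : 0 < h 0 := by simpa [hh] using hg0
  have hppos : h p < 0 := by simp only [hh]; linarith
  have hIVT := intermediate_value_Ioo' (le_of_lt hp0) hcont.continuousOn
  obtain ⟨c, hc, hc0⟩ := hIVT (⟨hppos, h0pos⟩ : (0:ℝ) ∈ Set.Ioo (h p) (h 0))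
  refine ⟨c, ⟨hc.1, lt_trans hc.2 hp1⟩, ?_⟩
  simp only [hh] at hc0
  linarith

end Aux

/-- The sibling-group contribution to the log-likelihood in the ξ-parametrization:
`F ξ = ∑ i ∈ B, (a i * log (1 - ξ i) + b i * log (ξ i)) - N * log (1 - ∏ j ∈ B, ξ j)`. -/
noncomputable def siblingLogLik {ι : Type*} (B : Finset ι) (N : ℝ) (a b : ι → ℝ)
    (ξ : ι → ℝ) : ℝ :=
  ∑ i ∈ B, (a i * Real.log (1 - ξ i) + b i * Real.log (ξ i)) -
    N * Real.log (1 - ∏ j ∈ B, ξ j)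

/-- The partial stationarity condition in direction `i` is equivalent to
`ξ i = (1 - a i / N) + (a i / N) * ∏ ξ`. -/
lemma derivChar {ι : Type*} [DecidableEq ι] (B : Finset ι) (N : ℝ) (hN : 0 < N)
    (a b : ι → ℝ) (i : ι) (hi : i ∈ B)
    (hab : a i + b i = N)
    (ξ : ι → ℝ) (hξ : ∀ j ∈ B, ξ j ∈ Set.Ioo (0 : ℝ) 1) :
    (HasDerivAt (fun t : ℝ => siblingLogLik B N a b (Function.update ξ i t)) 0 (ξ i) ↔
      ξ i = (1 - a i / N) + (a i / N) * ∏ j ∈ B, ξ j) := by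
  set x := ξ i with hx
  set Q := ∏ j ∈ B.erase i, ξ j with hQ
  set C := ∑ j ∈ B.erase i, (a j * Real.log (1 - ξ j) + b j * Real.log (ξ j)) with hC
  obtain ⟨hx0, hx1⟩ := hξ i hi
  have hQ0 : 0 < Q := Finset.prod_pos fun j hj => (hξ j (Finset.mem_of_mem_erase hj)).1
  have hQ1 : Q ≤ 1 := Finset.prod_le_one (fun j hj => (hξ j (Finset.mem_of_mem_erase hj)).1.le)
      (fun j hj => (hξ j (Finset.mem_of_mem_erase hj)).2.le)
  have hP : ∏ j ∈ B, ξ j = x * Q := (Finset.mul_prod_erase B ξ hi).symm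
  have hxQ1 : x * Q < 1 := by nlinarith
  have hxQ0 : 0 < x * Q := mul_pos hx0 hQ0
  have hfun : (fun t : ℝ => siblingLogLik B N a b (Function.update ξ i t)) =
      fun t : ℝ => (a i * Real.log (1 - t) + b i * Real.log t + C) -
        N * Real.log (1 - t * Q) := by
    funext t
    unfold siblingLogLik
    rw [Finset.prod_update_of_mem hi, ← Finset.erase_eq]
    congr 1
    · rw [← Finset.add_sum_erase _ _ hi, Function.update_self]
      congr 1
      exact Finset.sum_congr rfl fun j hj => by
        rw [Function.update_of_ne (Finset.ne_of_mem_erase hj)]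
  set D : ℝ := (a i * (-1 / (1 - x)) + b i * x⁻¹) - N * (-Q / (1 - x * Q)) with hD
  have hderiv : HasDerivAt (fun t : ℝ => (a i * Real.log (1 - t) + b i * Real.log t + C) -
      N * Real.log (1 - t * Q)) D x := by
    have h1 : HasDerivAt (fun t : ℝ => Real.log (1 - t)) (-1 / (1 - x)) x := by
      have := ((hasDerivAt_id x).const_sub 1).log (by linarith : 1 - x ≠ 0)
      simpa using this
    have h2 : HasDerivAt Real.log x⁻¹ x := Real.hasDerivAt_log hx0.ne'
    have h3 : HasDerivAt (fun t : ℝ => Real.log (1 - t * Q)) (-Q / (1 - x * Q)) x := by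
      have := (((hasDerivAt_id x).mul_const Q).const_sub 1).log (by linarith : 1 - x * Q ≠ 0)
      simpa using this
    exact (((h1.const_mul (a i)).add (h2.const_mul (b i))).add_const C).sub (h3.const_mul N)
  have halg : D = 0 ↔ x = (1 - a i / N) + (a i / N) * (x * Q) := by
    have hmulpos : 0 < x * (1 - x) * (1 - x * Q) := by
      apply mul_pos (mul_pos hx0 (by linarith)) (by linarith)
    have hid : D * (x * (1 - x) * (1 - x * Q)) =
        N * (((1 - a i / N) + (a i / N) * (x * Q)) - x) := by
      rw [hD]
      have hb' : b i = N - a i := by linarith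
      have h1x : (1:ℝ) - x ≠ 0 := by linarith
      have h1xQ : (1:ℝ) - x * Q ≠ 0 := by linarith
      have hx0' : x ≠ 0 := hx0.ne'
      field_simp [hb', h1x, h1xQ, hx0', hN.ne']
      rw [hb']
      ring
    constructor
    · intro h
      have hz : N * (((1 - a i / N) + (a i / N) * (x * Q)) - x) = 0 := by
        rw [← hid, h, zero_mul]
      have := (mul_eq_zero.mp hz).resolve_left hN.ne'
      linarith
    · intro h
      have hz : N * (((1 - a i / N) + (a i / N) * (x * Q)) - x) = 0 := by rw [← h]; ring
      rw [← hid] at hz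
      exact (mul_eq_zero.mp hz).resolve_right hmulpos.ne'
  rw [hfun, hP]
  constructor
  · intro h
    exact halg.mp (hderiv.unique h)
  · intro h
    have hD0 : D = 0 := halg.mpr h
    rw [← hD0]
    exact hderiv

/-- Under the regularity conditions `a i > 0`, `b i > 0`, `a i + b i = N` and
`∑ i ∈ B, a i > N`, the sibling-group log-likelihood `F` has exactly one stationary
point in `(0,1)^B`, namely `ξ i = (1 - r i) + r i * π*` where `r i = a i / N` and
`π*` is the unique solution in `(0,1)` of `π = ∏ j ∈ B, ((1 - r j) + r j * π)`. -/
theorem unique_stationary_point_of_siblingLogLik {ι : Type*} [DecidableEq ι]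
    (B : Finset ι) (hB : B.Nonempty) (N : ℝ) (hN : 0 < N) (a b : ι → ℝ)
    (ha : ∀ i ∈ B, 0 < a i) (hb : ∀ i ∈ B, 0 < b i)
    (hab : ∀ i ∈ B, a i + b i = N)
    (hsum : N < ∑ i ∈ B, a i) :
    ∃ π ∈ Set.Ioo (0 : ℝ) 1,
      π = ∏ j ∈ B, ((1 - a j / N) + (a j / N) * π) ∧
      (∀ π' ∈ Set.Ioo (0 : ℝ) 1,
        π' = ∏ j ∈ B, ((1 - a j / N) + (a j / N) * π') → π' = π) ∧
      ∀ ξ : ι → ℝ, (∀ i ∈ B, ξ i ∈ Set.Ioo (0 : ℝ) 1) →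
        ((∀ i ∈ B, HasDerivAt
            (fun t : ℝ => siblingLogLik B N a b (Function.update ξ i t)) 0 (ξ i)) ↔
          (∀ i ∈ B, ξ i = (1 - a i / N) + (a i / N) * π)) := by
  set r : ι → ℝ := fun j => a j / N with hr
  have hrB : ∀ j ∈ B, 0 < r j ∧ r j < 1 := by
    intro j hj
    have h1 := ha j hj
    have h2 := hb j hj
    have h3 := hab j hj
    constructor
    · exact div_pos h1 hN
    · rw [hr, div_lt_one hN]; linarith
  have hS : 1 < ∑ j ∈ B, r j := by
    have : ∑ j ∈ B, r j = (∑ j ∈ B, a j) / N := by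
      rw [Finset.sum_div]
    rw [this, lt_div_iff₀ hN, one_mul]
    exact hsum
  have hcard : 2 ≤ B.card := by
    by_contra hlt
    push_neg at hlt
    interval_cases h : B.card
    · exact absurd (Finset.card_eq_zero.mp h ▸ hB) (by simp [Finset.not_nonempty_empty])
    · obtain ⟨i, hBi⟩ := Finset.card_eq_one.mp h
      rw [hBi, Finset.sum_singleton] at hsum
      have hiB : i ∈ B := by rw [hBi]; exact Finset.mem_singleton_self i
      have := hb i hiB
      have := hab i hiB
      linarith
  obtain ⟨π, hπmem, hπfix⟩ := fixedExists B r hrB hS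
  have huniq : ∀ π' ∈ Set.Ioo (0:ℝ) 1,
      π' = ∏ j ∈ B, ((1 - r j) + r j * π') → π' = π := by
    intro π' hπ' hfix'
    rcases lt_trichotomy π' π with h | h | h
    · exfalso
      have := fixedLt B hcard r hrB π' π hπ' hπmem hfix' h
      rw [← hπfix] at this
      exact lt_irrefl π this
    · exact h
    · exfalso
      have := fixedLt B hcard r hrB π π' hπmem hπ' hπfix h
      rw [← hfix'] at this
      exact lt_irrefl π' this
  refine ⟨π, hπmem, hπfix, huniq, ?_⟩
  intro ξ hξ
  have hP0 : 0 < ∏ j ∈ B, ξ j := Finset.prod_pos fun j hj => (hξ j hj).1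
  have hP1 : ∏ j ∈ B, ξ j < 1 := by
    obtain ⟨j0, hj0⟩ := hB
    rw [← Finset.mul_prod_erase B ξ hj0]
    have he1 : ∏ j ∈ B.erase j0, ξ j ≤ 1 :=
      Finset.prod_le_one (fun j hj => (hξ j (Finset.mem_of_mem_erase hj)).1.le)
        (fun j hj => (hξ j (Finset.mem_of_mem_erase hj)).2.le)
    have he0 : 0 < ∏ j ∈ B.erase j0, ξ j :=
      Finset.prod_pos fun j hj => (hξ j (Finset.mem_of_mem_erase hj)).1
    obtain ⟨h0, h1⟩ := hξ j0 hj0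
    nlinarith
  constructor
  · intro hst
    have hfixP : ∀ i ∈ B, ξ i = (1 - r i) + r i * ∏ j ∈ B, ξ j := by
      intro i hi
      exact (derivChar B N hN a b i hi (hab i hi) ξ hξ).mp (hst i hi)
    have hPfix : ∏ j ∈ B, ξ j = ∏ j ∈ B, ((1 - r j) + r j * ∏ k ∈ B, ξ k) :=
      Finset.prod_congr rfl fun j hj => hfixP j hj ▸ rfl
    have hPeq : ∏ j ∈ B, ξ j = π := huniq _ ⟨hP0, hP1⟩ hPfix
    intro i hi
    rw [hfixP i hi, hPeq]
  · intro hfixπ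
    have hPeq : ∏ j ∈ B, ξ j = π := by
      have : ∏ j ∈ B, ξ j = ∏ j ∈ B, ((1 - r j) + r j * π) :=
        Finset.prod_congr rfl fun j hj => hfixπ j hj ▸ rfl
      rw [this, ← hπfix]
    intro i hi
    apply (derivChar B N hN a b i hi (hab i hi) ξ hξ).mpr
    rw [hPeq]
    exact hfixπ i hi
end
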